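/- Let n ≥ 1 and (j_1,…,j_n) ∈ ℤ_{≥1}^n. If the total degree N = j_1 + j_2 + ⋯ + j_n is odd, then for every (q;p_1,…,p_{n−1}) ∈ I_n the generalized Dedekind sum s_{j_1,…,j_n}(q;p_1,…,p_{n−1}) = 0. -/
import Mathlib


open Finset

/-- The `k`-th periodic Bernoulli function (restricted to rational arguments):
`B̃_k(t) = B_k({t})` for nonintegral `t` or `k ≠ 1`, and `B̃_1(t) = 0` at integers. -/
noncomputable def pBern (k : ℕ) (t : ℚ) : ℚ :=
  if k = 1 ∧ Int.fract t = 0 then 0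
  else (Polynomial.bernoulli k).eval (Int.fract t)

/-- Generalized Dedekind sum `s_{i_1,…,i_{m+1}}(q; p_1,…,p_m)` (dimension `n = m+1`). -/
noncomputable def gDedekind (m : ℕ) (i : Fin (m + 1) → ℕ) (q : ℕ) (p : Fin m → ℤ) : ℚ :=
  ∑ k : Fin m → Fin q,
    (∏ j : Fin m, pBern (i j.castSucc) ((k j : ℚ) / q)) *
      pBern (i (Fin.last m)) ((∑ j : Fin m, (p j : ℚ) * (k j : ℚ)) / q)

/-- Todd coefficient `t_{i_1,…,i_{m+1}}(q; p_1,…,p_m)` (dimension `n = m+1`). -/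
noncomputable def toddCoeff (m : ℕ) (i : Fin (m + 1) → ℕ) (q : ℕ) (p : Fin m → ℤ) : ℚ :=
  ∑ k : Fin m → Fin q,
    (∏ j : Fin m, (Polynomial.bernoulli (i j.castSucc)).eval ((k j : ℚ) / q)) *
      (Polynomial.bernoulli (i (Fin.last m))).eval
        (Int.fract ((∑ j : Fin m, (p j : ℚ) * (k j : ℚ)) / q))

/-- `d_{N,n}`: the lcm of the denominators of `B_{m_1}⋯B_{m_n}/(m_1!⋯m_n!)` over all
`(m_1,…,m_n) ∈ ℤ_{≥0}^n` with `m_1+⋯+m_n = N`. -/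
noncomputable def dConst (N n : ℕ) : ℕ :=
  (Finset.Nat.antidiagonalTuple n N).lcm fun t =>
    (∏ i, bernoulli (t i) / ((t i).factorial : ℚ)).den

/-- The family `p_1,…,p_{m+1}` with the convention `p_{m+1} = -1`, as units of `ZMod q`. -/
noncomputable def pUnit (m : ℕ) (q : ℕ) (p : Fin m → ℕ) (hp : ∀ j, Nat.Coprime (p j) q) :
    Fin (m + 1) → (ZMod q)ˣ :=
  Fin.lastCases (-1) (fun j => ZMod.unitOfCoprime (p j) (hp j))

section Aux

open Polynomial

theorem bern_comp_one_sub (n : ℕ) :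
    (Polynomial.bernoulli n).comp (1 - X) = (-1 : ℚ[X]) ^ n * Polynomial.bernoulli n := by
  induction n with
  | zero => simp
  | succ n ih =>
    have hd : derivative ((Polynomial.bernoulli (n+1)).comp (1 - X)
        - (-1 : ℚ[X]) ^ (n+1) * Polynomial.bernoulli (n+1)) = 0 := by
      simp only [derivative_sub, derivative_comp, derivative_bernoulli_add_one, derivative_mul,
        derivative_pow, derivative_neg, derivative_one, derivative_X, zero_sub, mul_comp,
        natCast_comp, add_comp, one_comp, X_comp]
      rw [ih]
      ring
    obtain hc := Polynomial.eq_C_of_derivative_eq_zero hd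
    have h1 : ((Polynomial.bernoulli (n+1)).comp (1 - X)
        - (-1 : ℚ[X]) ^ (n+1) * Polynomial.bernoulli (n+1)).eval 1 = 0 := by
      simp only [eval_sub, eval_comp, eval_one, eval_X, sub_self, eval_mul, eval_pow,
        eval_neg, Polynomial.bernoulli_eval_zero, Polynomial.bernoulli_eval_one]
      rw [bernoulli'_eq_bernoulli]
      ring_nf
      rw [Even.neg_one_pow ⟨n, by ring⟩]
      ring
    rw [hc, eval_C] at h1
    rw [h1, map_zero] at hc
    exact sub_eq_zero.mp hc

theorem bern_eval_one_sub (n : ℕ) (x : ℚ) :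
    (Polynomial.bernoulli n).eval (1 - x) = (-1 : ℚ) ^ n * (Polynomial.bernoulli n).eval x := by
  have := congrArg (Polynomial.eval x) (bern_comp_one_sub n)
  simpa [eval_comp] using this

end Aux

theorem pBern_congr (k : ℕ) {a b : ℚ} (h : Int.fract a = Int.fract b) :
    pBern k a = pBern k b := by
  unfold pBern; rw [h]

theorem bernoulli_odd_eq_zero' {n : ℕ} (h : Odd n) (hn : n ≠ 1) : _root_.bernoulli n = 0 := by
  rw [bernoulli_eq_bernoulli'_of_ne_one hn]
  refine bernoulli'_eq_zero_of_odd h ?_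
  obtain ⟨k, hk⟩ := h; omega

theorem pBern_neg (k : ℕ) (t : ℚ) : pBern k (-t) = (-1 : ℚ) ^ k * pBern k t := by
  by_cases h : Int.fract t = 0
  · have h2 : Int.fract (-t) = 0 := Int.fract_neg_eq_zero.mpr h
    by_cases hk : k = 1
    · simp [pBern, hk, h, h2]
    · rw [pBern, pBern, if_neg (by tauto), if_neg (by tauto), h, h2,
        Polynomial.bernoulli_eval_zero]
      rcases Nat.even_or_odd k with he | ho
      · rw [he.neg_one_pow, one_mul]
      · rw [bernoulli_odd_eq_zero' ho hk]; ring
  · have h2 : Int.fract (-t) = 1 - Int.fract t := Int.fract_neg h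
    have h3 : ¬(k = 1 ∧ Int.fract (-t) = 0) := by
      rintro ⟨-, h4⟩
      rw [h2, sub_eq_zero] at h4
      exact absurd h4.symm (ne_of_lt (Int.fract_lt_one t))
    rw [pBern, pBern, if_neg h3, if_neg (by tauto), h2, bern_eval_one_sub]

theorem fract_div_congr {q : ℕ} (hq : 0 < q) {a b : ℤ} (h : (q : ℤ) ∣ a - b) :
    Int.fract ((a : ℚ) / q) = Int.fract ((b : ℚ) / q) := by
  obtain ⟨c, hc⟩ := h
  have hq' : (q : ℚ) ≠ 0 := by positivity
  have hcQ : (a : ℚ) - b = q * c := by exact_mod_cast hc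
  have : (a : ℚ) / q = (b : ℚ) / q + c := by
    field_simp
    linarith
  rw [this, Int.fract_add_intCast]

/-- If the total degree `N = j_1 + ⋯ + j_n` is odd, then the generalized Dedekind sum
`s_{j_1,…,j_n}(q;p_1,…,p_{n-1})` vanishes, for every `(q;p_1,…,p_{n-1}) ∈ I_n`.
Here the dimension is `n = m + 1`. -/
theorem dedekind_sum_odd_vanishes
    (m : ℕ) (j : Fin (m + 1) → ℕ) (hj : ∀ i, 1 ≤ j i) (hodd : Odd (∑ i, j i))
    (q : ℕ) (hq : 0 < q)
    (p : Fin m → ℕ) (hp : ∀ a, 0 < p a ∧ p a < q ∧ Nat.Coprime (p a) q) :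
    gDedekind m j q (fun a => (p a : ℤ)) = 0 := by
  obtain ⟨Q, rfl⟩ : ∃ Q, q = Q + 1 := ⟨q - 1, by omega⟩
  set F : (Fin m → Fin (Q + 1)) → ℚ := fun k =>
    (∏ jx : Fin m, pBern (j jx.castSucc) ((k jx : ℚ) / (Q + 1))) *
      pBern (j (Fin.last m)) ((∑ jx : Fin m, ((p jx : ℤ) : ℚ) * (k jx : ℚ)) / (Q + 1)) with hF
  have hgd : gDedekind m j (Q + 1) (fun a => (p a : ℤ)) = ∑ k, F k := by
    rw [gDedekind]
    push_cast
    rfl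
  set e : (Fin m → Fin (Q + 1)) ≃ (Fin m → Fin (Q + 1)) :=
    Equiv.piCongrRight fun _ => Equiv.neg (Fin (Q + 1)) with he
  have hQpos : 0 < Q + 1 := Nat.succ_pos Q
  have hneg : ∀ k : Fin (Q + 1), ((Q + 1 : ℕ) : ℤ) ∣ ((-k : Fin (Q + 1)).val : ℤ) + (k.val : ℤ) := by
    intro k
    have h1 : ((-k : Fin (Q + 1)) : ℕ) = (Q + 1 - (k : ℕ)) % (Q + 1) := Fin.coe_neg k
    have h2 : (k : ℕ) < Q + 1 := k.isLt
    rcases Nat.eq_zero_or_pos (k : ℕ) with h0 | h0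
    · rw [h0, Nat.sub_zero, Nat.mod_self] at h1
      refine ⟨0, ?_⟩
      rw [h1, h0]
      simp
    · rw [Nat.mod_eq_of_lt (by omega)] at h1
      refine ⟨1, ?_⟩
      rw [h1]
      push_cast [Nat.cast_sub h2.le]
      ring
  have hfract : ∀ k : Fin (Q + 1),
      Int.fract (((-k : Fin (Q + 1)) : ℚ) / (Q + 1)) = Int.fract (-((k : ℚ) / (Q + 1))) := by
    intro k
    have := fract_div_congr hQpos (a := ((-k : Fin (Q + 1)).val : ℤ)) (b := -(k.val : ℤ))
      (by rw [sub_neg_eq_add]; exact hneg k)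
    rw [← neg_div]
    push_cast at this ⊢
    convert this using 3
  have key : ∀ i : ℕ, ∀ k : Fin (Q + 1),
      pBern i (((-k : Fin (Q + 1)) : ℚ) / (Q + 1)) = (-1 : ℚ) ^ i * pBern i ((k : ℚ) / (Q + 1)) := by
    intro i k
    rw [pBern_congr i (hfract k), pBern_neg]
  have hsum : ∀ k : Fin m → Fin (Q + 1),
      Int.fract ((∑ jx : Fin m, ((p jx : ℤ) : ℚ) * ((-(k jx) : Fin (Q + 1)) : ℚ)) / (Q + 1))
        = Int.fract (-((∑ jx : Fin m, ((p jx : ℤ) : ℚ) * ((k jx) : ℚ)) / (Q + 1))) := by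
    intro k
    have hmod : ((Q + 1 : ℕ) : ℤ) ∣ (∑ jx : Fin m, (p jx : ℤ) * ((-(k jx) : Fin (Q + 1)).val : ℤ))
        - (-(∑ jx : Fin m, (p jx : ℤ) * ((k jx).val : ℤ))) := by
      have hrw : (∑ jx : Fin m, (p jx : ℤ) * ((-(k jx) : Fin (Q + 1)).val : ℤ))
          - (-(∑ jx : Fin m, (p jx : ℤ) * ((k jx).val : ℤ)))
          = ∑ jx : Fin m, (p jx : ℤ) * (((-(k jx) : Fin (Q + 1)).val : ℤ) + ((k jx).val : ℤ)) := by
        rw [sub_neg_eq_add, ← Finset.sum_add_distrib]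
        exact Finset.sum_congr rfl fun jx _ => by ring
      rw [hrw]
      exact Finset.dvd_sum fun jx _ => Dvd.dvd.mul_left (hneg (k jx)) _
    have := fract_div_congr hQpos hmod
    rw [← neg_div]
    push_cast at this ⊢
    convert this using 3
  have hFe : ∀ k, F (e k) = - F k := by
    intro k
    have heval : ∀ jx : Fin m, (e k) jx = -(k jx) := fun jx => rfl
    rw [hF]
    simp only [heval]
    have h1 : (∏ jx : Fin m, pBern (j jx.castSucc) (((-(k jx) : Fin (Q + 1)) : ℚ) / (Q + 1)))
        = (-1 : ℚ) ^ (∑ jx : Fin m, j jx.castSucc) *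
          ∏ jx : Fin m, pBern (j jx.castSucc) ((k jx : ℚ) / (Q + 1)) := by
      rw [← Finset.prod_pow_eq_pow_sum, ← Finset.prod_mul_distrib]
      exact Finset.prod_congr rfl fun jx _ => key _ _
    have h2 : pBern (j (Fin.last m))
          ((∑ jx : Fin m, ((p jx : ℤ) : ℚ) * ((-(k jx) : Fin (Q + 1)) : ℚ)) / (Q + 1))
        = (-1 : ℚ) ^ (j (Fin.last m)) * pBern (j (Fin.last m))
          ((∑ jx : Fin m, ((p jx : ℤ) : ℚ) * ((k jx) : ℚ)) / (Q + 1)) := by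
      rw [pBern_congr _ (hsum k), pBern_neg]
    rw [h1, h2]
    have hsign : (-1 : ℚ) ^ (∑ jx : Fin m, j jx.castSucc) * (-1 : ℚ) ^ (j (Fin.last m)) = -1 := by
      rw [← pow_add, ← Fin.sum_univ_castSucc]
      exact hodd.neg_one_pow
    calc ((-1 : ℚ) ^ (∑ jx : Fin m, j jx.castSucc) * ∏ jx : Fin m, pBern (j jx.castSucc) ((k jx : ℚ) / (Q + 1))) *
        ((-1 : ℚ) ^ (j (Fin.last m)) * pBern (j (Fin.last m)) ((∑ jx : Fin m, ((p jx : ℤ) : ℚ) * ((k jx) : ℚ)) / (Q + 1)))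
        = ((-1 : ℚ) ^ (∑ jx : Fin m, j jx.castSucc) * (-1 : ℚ) ^ (j (Fin.last m))) *
          ((∏ jx : Fin m, pBern (j jx.castSucc) ((k jx : ℚ) / (Q + 1))) *
            pBern (j (Fin.last m)) ((∑ jx : Fin m, ((p jx : ℤ) : ℚ) * ((k jx) : ℚ)) / (Q + 1))) := by ring
      _ = - F k := by rw [hsign]; simp [hF]
  have hS : (∑ k, F k) = - ∑ k, F k := by
    conv_lhs => rw [← Equiv.sum_comp e F]
    rw [← Finset.sum_neg_distrib]
    exact Finset.sum_congr rfl fun k _ => hFe k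
  rw [hgd]
  linarith [hS]
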